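/- In R = k[y_12, y_13, y_14, y_15, y_23, y_24, y_25, y_34, y_35, y_45, y_1234, y_1235, y_1245, y_1345, y_2345], the two quadrics q1 = -y_1234·y_15 + y_1235·y_14 - y_1245·y_13 + y_1345·y_12 and q2 = -y_1234·y_25 + y_1235·y_24 - y_1245·y_23 + y_2345·y_12 form a regular sequence. -/

import Mathlib

open MvPolynomial in
private lemma primeXaux {n : ℕ} (K : Type*) [Field K] (i : Fin (n + 1)) :
    Prime (MvPolynomial.X i : MvPolynomial (Fin (n + 1)) K) := by
  have h0 : Prime (MvPolynomial.X (0 : Fin (n + 1)) : MvPolynomial (Fin (n + 1)) K) := by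
    rw [← MulEquiv.prime_iff (MvPolynomial.finSuccEquiv K n).toMulEquiv]
    have : (MvPolynomial.finSuccEquiv K n).toMulEquiv (MvPolynomial.X (0 : Fin (n + 1)))
        = Polynomial.X := MvPolynomial.finSuccEquiv_X_zero
    rw [this]
    exact Polynomial.prime_X
  rw [← MulEquiv.prime_iff (MvPolynomial.renameEquiv K (Equiv.swap i 0)).toMulEquiv]
  have : (MvPolynomial.renameEquiv K (Equiv.swap i 0)).toMulEquiv (MvPolynomial.X i)
      = MvPolynomial.X (0 : Fin (n + 1)) := by
    simp [MvPolynomial.renameEquiv_apply, Equiv.swap_apply_left]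
  rw [this]
  exact h0

private lemma prime_linear {A : Type*} [CommRing A] [IsDomain A] [UniqueFactorizationMonoid A]
    {a b : A} (ha : Prime a) (hb : ¬ a ∣ b) :
    Prime (Polynomial.C a * Polynomial.X + Polynomial.C b) := by
  set P := Polynomial.C a * Polynomial.X + Polynomial.C b with hP
  have hdeg : P.degree = 1 := Polynomial.degree_linear ha.ne_zero
  have hPne : P ≠ 0 := fun h => by simp [h] at hdeg
  have hcoeff1 : P.coeff 1 = a := by simp [hP]
  have hcoeff0 : P.coeff 0 = b := by simp [hP]
  rw [← UniqueFactorizationMonoid.irreducible_iff_prime]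
  have key : ∀ f g : Polynomial A, P = f * g → f.natDegree = 0 → IsUnit f := by
    intro f g hfg hf0
    have hfC : f = Polynomial.C (f.coeff 0) := Polynomial.eq_C_of_natDegree_eq_zero hf0
    set d := f.coeff 0 with hd
    rw [hfC, Polynomial.isUnit_C]
    have hda : d ∣ a := ⟨g.coeff 1, by
      rw [← hcoeff1, hfg, hfC]; simp [Polynomial.coeff_C_mul]⟩
    have hdb : d ∣ b := ⟨g.coeff 0, by
      rw [← hcoeff0, hfg, hfC]; simp [Polynomial.coeff_C_mul]⟩
    obtain ⟨e, he⟩ := hda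
    rcases ha.irreducible.isUnit_or_isUnit he with h | h
    · exact h
    · exfalso
      apply hb
      obtain ⟨u, rfl⟩ := h
      have had : a ∣ d := ⟨(u⁻¹ : Aˣ), by rw [he, mul_assoc, Units.mul_inv, mul_one]⟩
      exact had.trans hdb
  constructor
  · intro hu
    have := Polynomial.degree_eq_zero_of_isUnit hu
    rw [hdeg] at this
    exact one_ne_zero this
  · intro f g hfg
    have hf : f ≠ 0 := left_ne_zero_of_mul (hfg ▸ hPne)
    have hg : g ≠ 0 := right_ne_zero_of_mul (hfg ▸ hPne)
    have hnd : f.natDegree + g.natDegree = 1 := by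
      have h2 := Polynomial.natDegree_mul hf hg
      rw [← hfg] at h2
      have h3 : P.natDegree = 1 := Polynomial.natDegree_eq_of_degree_eq_some hdeg
      omega
    rcases Nat.eq_zero_or_pos f.natDegree with h | h
    · exact Or.inl (key f g hfg h)
    · exact Or.inr (key g f (by rw [hfg, mul_comm]) (by omega))

open MvPolynomial RingTheory in
/-- Variables of `MvPolynomial (Fin 15) k`:
`X 0 = y₁₂, X 1 = y₁₃, X 2 = y₁₄, X 3 = y₁₅, X 4 = y₂₃, X 5 = y₂₄, X 6 = y₂₅,
 X 7 = y₃₄, X 8 = y₃₅, X 9 = y₄₅, X 10 = y₁₂₃₄, X 11 = y₁₂₃₅, X 12 = y₁₂₄₅,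
 X 13 = y₁₃₄₅, X 14 = y₂₃₄₅`.
The two quadrics `q₁ = -y₁₂₃₄y₁₅ + y₁₂₃₅y₁₄ - y₁₂₄₅y₁₃ + y₁₃₄₅y₁₂` and
`q₂ = -y₁₂₃₄y₂₅ + y₁₂₃₅y₂₄ - y₁₂₄₅y₂₃ + y₂₃₄₅y₁₂` form a regular sequence. -/
theorem stmt8 (k : Type*) [Field k]
    (q1 q2 : MvPolynomial (Fin 15) k)
    (h1 : q1 = -(X 10 * X 3) + X 11 * X 2 - X 12 * X 1 + X 13 * X 0)
    (h2 : q2 = -(X 10 * X 6) + X 11 * X 5 - X 12 * X 4 + X 14 * X 0) :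
    Sequence.IsRegular (MvPolynomial (Fin 15) k) [q1, q2] := by
  classical
  -- the image of q1 under finSuccEquiv
  have e0 : finSuccEquiv k 14 (X (0 : Fin 15)) = Polynomial.X := finSuccEquiv_X_zero
  have e1 : finSuccEquiv k 14 (X (1 : Fin 15)) = Polynomial.C (X 0) := by
    rw [show (1 : Fin 15) = Fin.succ (0 : Fin 14) by decide]; exact finSuccEquiv_X_succ
  have e2 : finSuccEquiv k 14 (X (2 : Fin 15)) = Polynomial.C (X 1) := by
    rw [show (2 : Fin 15) = Fin.succ (1 : Fin 14) by decide]; exact finSuccEquiv_X_succ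
  have e3 : finSuccEquiv k 14 (X (3 : Fin 15)) = Polynomial.C (X 2) := by
    rw [show (3 : Fin 15) = Fin.succ (2 : Fin 14) by decide]; exact finSuccEquiv_X_succ
  have e10 : finSuccEquiv k 14 (X (10 : Fin 15)) = Polynomial.C (X 9) := by
    rw [show (10 : Fin 15) = Fin.succ (9 : Fin 14) by decide]; exact finSuccEquiv_X_succ
  have e11 : finSuccEquiv k 14 (X (11 : Fin 15)) = Polynomial.C (X 10) := by
    rw [show (11 : Fin 15) = Fin.succ (10 : Fin 14) by decide]; exact finSuccEquiv_X_succ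
  have e12 : finSuccEquiv k 14 (X (12 : Fin 15)) = Polynomial.C (X 11) := by
    rw [show (12 : Fin 15) = Fin.succ (11 : Fin 14) by decide]; exact finSuccEquiv_X_succ
  have e13 : finSuccEquiv k 14 (X (13 : Fin 15)) = Polynomial.C (X 12) := by
    rw [show (13 : Fin 15) = Fin.succ (12 : Fin 14) by decide]; exact finSuccEquiv_X_succ
  have he1 : finSuccEquiv k 14 q1 = Polynomial.C (X 12) * Polynomial.X +
      Polynomial.C (-(X 9 * X 2) + X 10 * X 1 - X 11 * X 0) := by
    rw [h1]
    simp only [map_add, map_sub, map_neg, map_mul, e0, e1, e2, e3, e10, e11, e12, e13]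
    ring
  have hnd : ¬ (X 12 : MvPolynomial (Fin 14) k) ∣
      (-(X 9 * X 2) + X 10 * X 1 - X 11 * X 0) := by
    rintro ⟨t, ht⟩
    have := congrArg (eval (fun j : Fin 14 => if j.val = 9 ∨ j.val = 2 then (1 : k) else 0)) ht
    simp (config := { decide := true }) at this
  have hq1prime : Prime q1 := by
    rw [← MulEquiv.prime_iff (finSuccEquiv k 14).toMulEquiv]
    show Prime (finSuccEquiv k 14 q1)
    rw [he1]
    exact prime_linear (primeXaux (n := 13) k 12) hnd
  have hq1ne : q1 ≠ 0 := hq1prime.ne_zero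
  have hndvd : ¬ q1 ∣ q2 := by
    rintro ⟨t, ht⟩
    rw [h1, h2] at ht
    have := congrArg (eval (fun j : Fin 15 => if j.val = 6 ∨ j.val = 10 then (1 : k) else 0)) ht
    simp (config := { decide := true }) at this
  refine ⟨⟨?_⟩, ?_⟩
  · intro i hi
    simp only [List.length_cons, List.length_nil] at hi
    interval_cases i
    · -- q1 is a nonzerodivisor
      rw [isSMulRegular_quotient_iff_mem_of_smul_mem]
      intro x hx
      have hN : (Ideal.ofList (List.take 0 [q1, q2]) • ⊤ : Submodule (MvPolynomial (Fin 15) k)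
          (MvPolynomial (Fin 15) k)) = ⊥ := by
        rw [show List.take 0 [q1, q2] = [] from rfl, Ideal.ofList_nil, Submodule.bot_smul]
      rw [hN] at hx ⊢
      rw [Submodule.mem_bot] at hx ⊢
      simp only [List.getElem_cons_zero, smul_eq_mul] at hx
      exact (mul_eq_zero.mp hx).resolve_left hq1ne
    · -- q2 is a nonzerodivisor mod (q1)
      rw [isSMulRegular_quotient_iff_mem_of_smul_mem]
      intro x hx
      have hN : (Ideal.ofList (List.take 1 [q1, q2]) • ⊤ : Submodule (MvPolynomial (Fin 15) k)
          (MvPolynomial (Fin 15) k)) = Ideal.span {q1} := by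
        rw [show List.take 1 [q1, q2] = [q1] from rfl, Ideal.ofList_singleton,
          Ideal.smul_eq_mul, Ideal.mul_top]
      rw [hN] at hx ⊢
      rw [Ideal.mem_span_singleton] at hx ⊢
      simp only [smul_eq_mul, List.getElem_cons_succ, List.getElem_cons_zero] at hx
      rcases (hq1prime.dvd_mul.mp hx) with h | h
      · exact absurd h hndvd
      · exact h
  · -- the ideal is proper
    intro htop
    have h1mem : (1 : MvPolynomial (Fin 15) k) ∈
        (Ideal.ofList [q1, q2] • ⊤ : Submodule (MvPolynomial (Fin 15) k)
          (MvPolynomial (Fin 15) k)) := htop ▸ Submodule.mem_top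
    rw [Ideal.smul_eq_mul, Ideal.mul_top] at h1mem
    have hset : {r | r ∈ [q1, q2]} = ({q1, q2} : Set (MvPolynomial (Fin 15) k)) := by
      ext r; simp
    rw [Ideal.ofList, hset, Ideal.mem_span_pair] at h1mem
    obtain ⟨u, v, huv⟩ := h1mem
    have := congrArg constantCoeff huv
    rw [h1, h2] at this
    simp at this
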